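/- Let X be a separable Banach space, (γₙ) independent symmetric random variables, Σ_N = Σ_{n=0}^N γₙxₙ. If Σ_N → Σ_∞ in probability (i.e., P[‖Σ_∞ − Σ_N‖ > ε] → 0 for all ε > 0), then Σ_N → Σ_∞ almost surely in norm. The proof uses Lévy's maximal inequality: P[∃ N₀ ≤ N : ‖Σ_{N₀}‖ ≥ R] ≤ 2P[‖Σ_N‖ ≥ R]. -/

import Mathlib

open Filter Topology MeasureTheory Finset

open scoped ENNReal NNReal

noncomputable section

lemma flip_law {Ω : Type*} [MeasurableSpace Ω] (P : Measure Ω) [IsProbabilityMeasure P]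
    (γ : ℕ → Ω → ℝ) (hmeas : ∀ n, Measurable (γ n))
    (hindep : ProbabilityTheory.iIndepFun γ P)
    (hsymm : ∀ n, Measure.map (γ n) P = Measure.map (fun ω => -(γ n ω)) P)
    (N : ℕ) (T : Finset (Fin (N + 1))) :
    Measure.map (fun ω (i : Fin (N + 1)) => if i ∈ T then -(γ i ω) else γ i ω) P
      = Measure.map (fun ω (i : Fin (N + 1)) => γ i ω) P := by
  classical
  induction T using Finset.induction_on with
  | empty => simp
  | @insert j T hjT ih =>
    -- one extra flip at j
    set W : Ω → Fin (N + 1) → ℝ := fun ω i => if i ∈ T then -(γ i ω) else γ i ω with hW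
    set Z : Ω → Fin (N + 1) → ℝ := fun ω i => if i = j then 0 else W ω i with hZ
    have hWmeas : Measurable W := by
      refine measurable_pi_lambda _ fun i => ?_
      by_cases h : i ∈ T <;> simp only [hW, h, if_true, if_false]
      · exact (hmeas i).neg
      · exact hmeas i
    have hZmeas : Measurable Z := by
      refine measurable_pi_lambda _ fun i => ?_
      by_cases h : i = j <;> simp only [hZ, h, if_true, if_false]
      · exact measurable_const
      · exact (hWmeas.eval (a := i))
    -- independence of γ j and Z
    set T' : Finset ℕ := (Finset.range (N + 1)).erase (j : ℕ) with hT'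
    have hdisj : Disjoint ({(j : ℕ)} : Finset ℕ) T' := by
      simp [hT', Finset.disjoint_left]
    have hbase := hindep.indepFun_finset {(j : ℕ)} T' hdisj hmeas
    have hjmem : (j : ℕ) ∈ ({(j : ℕ)} : Finset ℕ) := Finset.mem_singleton_self _
    set ev : (({(j : ℕ)} : Finset ℕ) → ℝ) → ℝ := fun g => g ⟨(j : ℕ), hjmem⟩ with hev
    set φ : (T' → ℝ) → Fin (N + 1) → ℝ := fun g i =>
      if h : (i : ℕ) ∈ T' then (if i ∈ T then -(g ⟨i, h⟩) else g ⟨i, h⟩) else 0 with hφ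
    have hφmeas : Measurable φ := by
      refine measurable_pi_lambda _ fun i => ?_
      by_cases h : (i : ℕ) ∈ T'
      · by_cases h2 : i ∈ T <;> simp only [hφ, h, h2, dif_pos, if_true, if_false]
        · exact (measurable_pi_apply _).neg
        · exact measurable_pi_apply _
      · simp only [hφ, h, dif_neg, not_false_iff]
        exact measurable_const
    have hInd : ProbabilityTheory.IndepFun (γ j) Z P := by
      have := hbase.comp (φ := ev) (ψ := φ)
        (measurable_pi_apply (⟨(j : ℕ), hjmem⟩ : ({(j : ℕ)} : Finset ℕ)) : Measurable ev) hφmeas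
      convert this using 1
      · rfl
      funext ω
      funext i
      by_cases h : i = j
      · subst h
        have hni : (i : ℕ) ∉ T' := by simp [hT']
        simp [hZ, hφ, Function.comp, hni]
      · have hne : (i : ℕ) ≠ (j : ℕ) := fun hc => h (Fin.val_injective hc)
        have hiT' : (i : ℕ) ∈ T' := by
          simp [hT', hne, i.isLt, Nat.lt_succ_iff, Fin.is_le]
        simp [hZ, hφ, h, Function.comp, hiT', hW]
    have hIndNeg : ProbabilityTheory.IndepFun (fun ω => -(γ j ω)) Z P := by
      have := hInd.comp (φ := fun r : ℝ => -r) (ψ := id) measurable_neg measurable_id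
      exact this
    have hmap1 : Measure.map (fun ω => (γ j ω, Z ω)) P
        = (Measure.map (γ j) P).prod (Measure.map Z P) :=
      (ProbabilityTheory.indepFun_iff_map_prod_eq_prod_map_map (hmeas j).aemeasurable
        hZmeas.aemeasurable).1 hInd
    have hmap2 : Measure.map (fun ω => (-(γ j ω), Z ω)) P
        = (Measure.map (fun ω => -(γ j ω)) P).prod (Measure.map Z P) :=
      (ProbabilityTheory.indepFun_iff_map_prod_eq_prod_map_map (hmeas j).neg.aemeasurable
        hZmeas.aemeasurable).1 hIndNeg
    have hpair : Measure.map (fun ω => (-(γ j ω), Z ω)) P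
        = Measure.map (fun ω => (γ j ω, Z ω)) P := by
      rw [hmap1, hmap2, ← hsymm j]
    set Ψ : ℝ × (Fin (N + 1) → ℝ) → Fin (N + 1) → ℝ :=
      fun p i => if i = j then p.1 else p.2 i with hΨ
    have hΨmeas : Measurable Ψ := by
      refine measurable_pi_lambda _ fun i => ?_
      by_cases h : i = j <;> simp only [hΨ, h, if_true, if_false]
      · exact measurable_fst
      · exact (measurable_pi_apply i).comp measurable_snd
    have h1 : (fun ω (i : Fin (N + 1)) => if i ∈ insert j T then -(γ i ω) else γ i ω)
        = Ψ ∘ (fun ω => (-(γ j ω), Z ω)) := by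
      funext ω i
      by_cases h : i = j
      · subst h; simp [hΨ, Function.comp]
      · simp [hΨ, hZ, h, Function.comp, Finset.mem_insert, hW]
    have h2 : W = Ψ ∘ (fun ω => (γ j ω, Z ω)) := by
      funext ω i
      by_cases h : i = j
      · subst h; simp [hΨ, hW, hjT, Function.comp]
      · simp [hΨ, hZ, h, Function.comp]
    rw [h1, ← Measure.map_map hΨmeas
      (show Measurable (fun ω => (-(γ j ω), Z ω)) from (hmeas j).neg.prodMk hZmeas), hpair,
      Measure.map_map hΨmeas ((hmeas j).prodMk hZmeas), ← h2, ih]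

lemma levy_ineq {X : Type*} [NormedAddCommGroup X] [NormedSpace ℝ X]
    [MeasurableSpace X] [BorelSpace X] [SecondCountableTopology X]
    {Ω : Type*} [MeasurableSpace Ω] (P : Measure Ω) [IsProbabilityMeasure P]
    (γ : ℕ → Ω → ℝ) (hmeas : ∀ n, Measurable (γ n))
    (hindep : ProbabilityTheory.iIndepFun γ P)
    (hsymm : ∀ n, Measure.map (γ n) P = Measure.map (fun ω => -(γ n ω)) P)
    (x : ℕ → X) (M N : ℕ) (hMN : M ≤ N) (ε : ℝ) :
    P {ω | ∃ k, M ≤ k ∧ k ≤ N ∧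
        ε < ‖(∑ n ∈ Finset.range (k + 1), γ n ω • x n)
          - ∑ n ∈ Finset.range (M + 1), γ n ω • x n‖}
      ≤ 2 * P {ω | ε < ‖(∑ n ∈ Finset.range (N + 1), γ n ω • x n)
          - ∑ n ∈ Finset.range (M + 1), γ n ω • x n‖} := by
  classical
  set S : ℕ → Ω → X := fun j ω => ∑ n ∈ Finset.range (j + 1), γ n ω • x n with hS
  have hSmeas : ∀ j, Measurable (S j) := fun j =>
    Finset.measurable_sum _ fun n _ =>
      ((continuous_id.smul continuous_const).measurable).comp (hmeas n)
  set g : ℕ → (Fin (N + 1) → ℝ) → X :=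
    fun j v => ∑ n : Fin (N + 1), if (n : ℕ) ≤ j then v n • x n else 0 with hg
  have hgmeas : ∀ j, Measurable (g j) := by
    intro j
    refine Finset.measurable_sum _ fun n _ => ?_
    by_cases h : (n : ℕ) ≤ j <;> simp only [h, if_true, if_false]
    · exact ((continuous_id.smul continuous_const).measurable).comp (measurable_pi_apply n)
    · exact measurable_const
  set V : Ω → Fin (N + 1) → ℝ := fun ω i => γ i ω with hV
  have hVmeas : Measurable V := measurable_pi_lambda _ fun i => hmeas i
  have hgS : ∀ j, j ≤ N → ∀ ω, g j (V ω) = S j ω := by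
    intro j hj ω
    have h1 : g j (V ω) = ∑ n ∈ Finset.range (N + 1), (if n ≤ j then γ n ω • x n else 0) :=
      Fin.sum_univ_eq_sum_range (fun n => if n ≤ j then γ n ω • x n else 0) (N + 1)
    have h2 : ∑ n ∈ Finset.range (j + 1), (if n ≤ j then γ n ω • x n else 0)
        = ∑ n ∈ Finset.range (N + 1), (if n ≤ j then γ n ω • x n else 0) := by
      refine Finset.sum_subset (Finset.range_subset_range.2 (by omega)) ?_
      intro n _ hn
      simp only [Finset.mem_range] at hn
      exact if_neg (by omega)
    have h3 : ∑ n ∈ Finset.range (j + 1), (if n ≤ j then γ n ω • x n else 0) = S j ω := by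
      refine Finset.sum_congr rfl fun n hn => ?_
      simp only [Finset.mem_range] at hn
      exact if_pos (by omega)
    rw [h1, ← h2, h3]
  set A : ℕ → Set Ω := fun k => {ω | (M ≤ k ∧ k ≤ N) ∧ ε < ‖S k ω - S M ω‖ ∧
      ∀ j ∈ Set.Ico M k, ‖S j ω - S M ω‖ ≤ ε} with hA
  set E : Set Ω := {ω | ε < ‖S N ω - S M ω‖} with hE
  have hnormmeas : ∀ k, Measurable fun ω => ‖S k ω - S M ω‖ :=
    fun k => ((hSmeas k).sub (hSmeas M)).norm
  have hEmeas : MeasurableSet E := measurableSet_lt measurable_const (hnormmeas N)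
  have hAmeas : ∀ k, MeasurableSet (A k) := by
    intro k
    have hrw : A k = ({ω | ε < ‖S k ω - S M ω‖} ∩
        ⋂ j, {ω | j ∈ Set.Ico M k → ‖S j ω - S M ω‖ ≤ ε}) ∩ {ω : Ω | M ≤ k ∧ k ≤ N} := by
      ext ω
      simp only [hA, Set.mem_setOf_eq, Set.mem_inter_iff, Set.mem_iInter]
      tauto
    rw [hrw]
    refine MeasurableSet.inter (MeasurableSet.inter ?_ ?_) (MeasurableSet.const _)
    · exact measurableSet_lt measurable_const (hnormmeas k)
    · refine MeasurableSet.iInter fun j => ?_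
      by_cases hp : j ∈ Set.Ico M k
      · simp only [hp, forall_true_left]
        exact measurableSet_le (hnormmeas j) measurable_const
      · simp [hp]
  have key_disj : ∀ {k k' : ℕ}, k < k' → Disjoint (A k) (A k') := by
    intro k k' hkk'
    rw [Set.disjoint_left]
    rintro ω ⟨⟨hMk, _⟩, hk, _⟩ ⟨_, _, hall⟩
    exact absurd hk (not_lt.2 (hall k ⟨hMk, hkk'⟩))
  have hUnion : {ω | ∃ k, M ≤ k ∧ k ≤ N ∧ ε < ‖S k ω - S M ω‖}
      = ⋃ k ∈ Finset.Icc M N, A k := by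
    ext ω
    simp only [Set.mem_setOf_eq, Set.mem_iUnion, Finset.mem_Icc, hA, exists_prop]
    constructor
    · rintro hex0
      have hex : ∃ k, M ≤ k ∧ k ≤ N ∧ ε < ‖S k ω - S M ω‖ := hex0
      obtain ⟨h1, h2, h3⟩ := Nat.find_spec hex
      refine ⟨Nat.find hex, ⟨h1, h2⟩, ⟨h1, h2⟩, h3, ?_⟩
      intro j hj
      by_contra hc
      push_neg at hc
      exact Nat.find_min hex hj.2 ⟨hj.1, (le_of_lt hj.2).trans h2, hc⟩
    · rintro ⟨k, _, ⟨h1, h2⟩, h3, _⟩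
      exact ⟨k, h1, h2, h3⟩
  have hkey : ∀ k, M ≤ k → k ≤ N → P (A k) ≤ 2 * P (A k ∩ E) := by
    intro k hMk hkN
    set F : (Fin (N + 1) → ℝ) → Fin (N + 1) → ℝ :=
      fun v i => if k < (i : ℕ) then -v i else v i with hF
    have hFmeas : Measurable F := by
      refine measurable_pi_lambda _ fun i => ?_
      by_cases h : k < (i : ℕ) <;> simp only [hF, h, if_true, if_false]
      · exact (measurable_pi_apply i).neg
      · exact measurable_pi_apply i
    have hFlaw : Measure.map F (Measure.map V P) = Measure.map V P := by
      rw [Measure.map_map hFmeas hVmeas]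
      have hcomp : F ∘ V = fun ω (i : Fin (N + 1)) =>
          if i ∈ Finset.univ.filter (fun i : Fin (N + 1) => k < (i : ℕ)) then -(γ i ω)
          else γ i ω := by
        funext ω i
        simp [hF, hV]
      rw [hcomp, flip_law P γ hmeas hindep hsymm N _]
    have hgF_le : ∀ j, j ≤ k → ∀ v, g j (F v) = g j v := by
      intro j hj v
      refine Finset.sum_congr rfl fun n _ => ?_
      by_cases hn : (n : ℕ) ≤ j
      · have h2 : ¬ k < (n : ℕ) := by omega
        simp [hF, hn, h2]
      · simp [hn]
    have hgF_N : ∀ v, g N (F v) = g k v - (g N v - g k v) := by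
      intro v
      have hterm : ∀ n : Fin (N + 1), (if (n : ℕ) ≤ N then F v n • x n else 0)
          = (if (n : ℕ) ≤ k then v n • x n else 0)
            - ((if (n : ℕ) ≤ N then v n • x n else 0)
              - (if (n : ℕ) ≤ k then v n • x n else 0)) := by
        intro n
        have hnN : (n : ℕ) ≤ N := Nat.lt_succ_iff.mp n.isLt
        by_cases hn : (n : ℕ) ≤ k
        · have h2 : ¬ k < (n : ℕ) := by omega
          simp [hF, hnN, hn, h2]
        · have h2 : k < (n : ℕ) := by omega
          simp [hF, hnN, hn, h2, neg_smul]
      calc g N (F v) = ∑ n : Fin (N + 1),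
            ((if (n : ℕ) ≤ k then v n • x n else 0)
            - ((if (n : ℕ) ≤ N then v n • x n else 0)
              - (if (n : ℕ) ≤ k then v n • x n else 0))) :=
          Finset.sum_congr rfl fun n _ => hterm n
        _ = g k v - (g N v - g k v) := by
          simp [hg, Finset.sum_sub_distrib]
    set E' : Set Ω := {ω | ε < ‖(S k ω - (S N ω - S k ω)) - S M ω‖} with hE'
    have hsubset : A k ⊆ (A k ∩ E) ∪ (A k ∩ E') := by
      intro ω hω
      have h3 : ε < ‖S k ω - S M ω‖ := hω.2.1
      by_cases hE1 : ε < ‖S N ω - S M ω‖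
      · exact Or.inl ⟨hω, hE1⟩
      · refine Or.inr ⟨hω, ?_⟩
        push_neg at hE1
        by_contra hc
        simp only [hE', Set.mem_setOf_eq, not_lt] at hc
        have hid : (S N ω - S M ω) + ((S k ω - (S N ω - S k ω)) - S M ω)
            = (2 : ℝ) • (S k ω - S M ω) := by
          rw [two_smul]
          abel
        have hnorm := norm_add_le (S N ω - S M ω) ((S k ω - (S N ω - S k ω)) - S M ω)
        rw [hid, norm_smul] at hnorm
        simp only [Real.norm_ofNat] at hnorm
        linarith
    set C : Set (Fin (N + 1) → ℝ) := {v | ((M ≤ k ∧ k ≤ N) ∧ ε < ‖g k v - g M v‖ ∧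
        ∀ j ∈ Set.Ico M k, ‖g j v - g M v‖ ≤ ε) ∧ ε < ‖g N v - g M v‖} with hC
    have hCmeas : MeasurableSet C := by
      have hrw : C = (({v | ε < ‖g k v - g M v‖} ∩
          ⋂ j, {v | j ∈ Set.Ico M k → ‖g j v - g M v‖ ≤ ε})
          ∩ {v : Fin (N + 1) → ℝ | M ≤ k ∧ k ≤ N})
          ∩ {v | ε < ‖g N v - g M v‖} := by
        ext v
        simp only [hC, Set.mem_setOf_eq, Set.mem_inter_iff, Set.mem_iInter]
        tauto
      rw [hrw]
      refine MeasurableSet.inter (MeasurableSet.inter (MeasurableSet.inter ?_ ?_)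
        (MeasurableSet.const _)) ?_
      · exact measurableSet_lt measurable_const ((hgmeas k).sub (hgmeas M)).norm
      · refine MeasurableSet.iInter fun j => ?_
        by_cases hp : j ∈ Set.Ico M k
        · simp only [hp, forall_true_left]
          exact measurableSet_le ((hgmeas j).sub (hgmeas M)).norm measurable_const
        · simp [hp]
      · exact measurableSet_lt measurable_const ((hgmeas N).sub (hgmeas M)).norm
    have hpre1 : V ⁻¹' C = A k ∩ E := by
      ext ω
      have e1 : g k (V ω) = S k ω := hgS k hkN ω
      have e2 : g M (V ω) = S M ω := hgS M hMN ω
      have e3 : g N (V ω) = S N ω := hgS N le_rfl ω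
      simp only [hC, hA, hE, Set.mem_preimage, Set.mem_setOf_eq, Set.mem_inter_iff, e1, e2, e3]
      constructor
      · rintro ⟨⟨h1, h2, h3⟩, h4⟩
        exact ⟨⟨h1, h2, fun j hj => by
          rw [← hgS j (hj.2.le.trans hkN) ω]; exact h3 j hj⟩, h4⟩
      · rintro ⟨⟨h1, h2, h3⟩, h4⟩
        exact ⟨⟨h1, h2, fun j hj => by
          rw [hgS j (hj.2.le.trans hkN) ω]; exact h3 j hj⟩, h4⟩
    have hpre2 : V ⁻¹' (F ⁻¹' C) = A k ∩ E' := by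
      ext ω
      have e1 : g k (F (V ω)) = S k ω := by rw [hgF_le k le_rfl, hgS k hkN]
      have e2 : g M (F (V ω)) = S M ω := by rw [hgF_le M hMk, hgS M hMN]
      have e3 : g N (F (V ω)) = S k ω - (S N ω - S k ω) := by
        rw [hgF_N, hgS k hkN, hgS N le_rfl]
      simp only [hC, hA, hE', Set.mem_preimage, Set.mem_setOf_eq, Set.mem_inter_iff, e1, e2, e3]
      constructor
      · rintro ⟨⟨h1, h2, h3⟩, h4⟩
        exact ⟨⟨h1, h2, fun j hj => by
          rw [← hgS j (hj.2.le.trans hkN) ω, ← hgF_le j hj.2.le]; exact h3 j hj⟩, h4⟩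
      · rintro ⟨⟨h1, h2, h3⟩, h4⟩
        exact ⟨⟨h1, h2, fun j hj => by
          rw [hgF_le j hj.2.le, hgS j (hj.2.le.trans hkN) ω]; exact h3 j hj⟩, h4⟩
    have hPeq : P (A k ∩ E') = P (A k ∩ E) := by
      have h1 : P (A k ∩ E) = Measure.map V P C := by
        rw [Measure.map_apply hVmeas hCmeas, hpre1]
      have h2 : P (A k ∩ E') = Measure.map V P (F ⁻¹' C) := by
        rw [Measure.map_apply hVmeas (hFmeas hCmeas), hpre2]
      rw [h2, ← Measure.map_apply hFmeas hCmeas, hFlaw, ← h1]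
    calc P (A k) ≤ P ((A k ∩ E) ∪ (A k ∩ E')) := measure_mono hsubset
      _ ≤ P (A k ∩ E) + P (A k ∩ E') := measure_union_le _ _
      _ = 2 * P (A k ∩ E) := by rw [hPeq, two_mul]
  have hpd : Set.PairwiseDisjoint (↑(Finset.Icc M N)) A := by
    intro k _ k' _ hne
    rcases hne.lt_or_gt with h | h
    · exact key_disj h
    · exact (key_disj h).symm
  have hpd' : Set.PairwiseDisjoint (↑(Finset.Icc M N)) (fun k => A k ∩ E) := by
    intro k hk k' hk' hne
    exact ((hpd hk hk' hne).mono Set.inter_subset_left Set.inter_subset_left)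
  calc P {ω | ∃ k, M ≤ k ∧ k ≤ N ∧ ε < ‖S k ω - S M ω‖}
      = ∑ k ∈ Finset.Icc M N, P (A k) := by
        rw [hUnion]; exact measure_biUnion_finset hpd fun k _ => hAmeas k
    _ ≤ ∑ k ∈ Finset.Icc M N, 2 * P (A k ∩ E) :=
        Finset.sum_le_sum fun k hk =>
          hkey k (Finset.mem_Icc.mp hk).1 (Finset.mem_Icc.mp hk).2
    _ = 2 * ∑ k ∈ Finset.Icc M N, P (A k ∩ E) := (Finset.mul_sum _ _ _).symm
    _ = 2 * P (⋃ k ∈ Finset.Icc M N, (A k ∩ E)) := by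
        rw [measure_biUnion_finset hpd' fun k _ => (hAmeas k).inter hEmeas]
    _ ≤ 2 * P E := by
        refine mul_le_mul_right (measure_mono ?_) 2
        exact Set.iUnion₂_subset fun k _ => Set.inter_subset_right

/-- for partial sums Σ_N = Σ_{n≤N} γₙxₙ of independent symmetric scalar
multiples, convergence in probability to Σ_∞ implies almost sure norm convergence. -/
theorem conv_in_prob_implies_as {X : Type*} [NormedAddCommGroup X] [NormedSpace ℝ X]
    [CompleteSpace X] [TopologicalSpace.SeparableSpace X]
    {Ω : Type*} [MeasurableSpace Ω] (P : Measure Ω) [IsProbabilityMeasure P]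
    (γ : ℕ → Ω → ℝ) (hmeas : ∀ n, Measurable (γ n))
    (hindep : ProbabilityTheory.iIndepFun γ P)
    (hsymm : ∀ n, Measure.map (γ n) P = Measure.map (fun ω => -(γ n ω)) P)
    (x : ℕ → X) (Sinf : Ω → X) (hSinf : @Measurable Ω X _ (borel X) Sinf)
    (hprob : ∀ ε : ℝ, 0 < ε →
      Tendsto (fun N => P {ω | ε < ‖Sinf ω - ∑ n ∈ Finset.range (N + 1), γ n ω • x n‖})
        atTop (nhds 0)) :
    ∀ᵐ ω ∂P,
      Tendsto (fun N => ∑ n ∈ Finset.range (N + 1), γ n ω • x n) atTop (nhds (Sinf ω)) := by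
  borelize X
  haveI : SecondCountableTopology X := UniformSpace.secondCountable_of_separable X
  classical
  set S : ℕ → Ω → X := fun j ω => ∑ n ∈ Finset.range (j + 1), γ n ω • x n with hS
  -- choice of cutoffs
  have hchoice : ∀ j : ℕ, ∃ M, ∀ N, M ≤ N →
      P {ω | (2⁻¹ : ℝ) ^ j / 2 < ‖Sinf ω - S N ω‖} < (2⁻¹ : ℝ≥0∞) ^ (j + 3) := by
    intro j
    have hpos : (0 : ℝ) < (2⁻¹ : ℝ) ^ j / 2 := by positivity
    have h0 : (0 : ℝ≥0∞) < (2⁻¹ : ℝ≥0∞) ^ (j + 3) := by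
      refine ENNReal.pow_pos ?_ _
      simp
    have h1 := (hprob _ hpos).eventually_lt_const h0
    rw [eventually_atTop] at h1
    obtain ⟨a, ha⟩ := h1
    exact ⟨a, fun N hN => ha N hN⟩
  choose M hM using hchoice
  set G : ℕ → Set Ω := fun j => {ω | ∃ k, M j ≤ k ∧ (2⁻¹ : ℝ) ^ j < ‖S k ω - S (M j) ω‖}
    with hG
  have htwo : (2⁻¹ : ℝ≥0∞) + 2⁻¹ = 1 := by
    rw [← one_div]; exact ENNReal.add_halves 1
  have hGbound : ∀ j, P (G j) ≤ (2⁻¹ : ℝ≥0∞) ^ j := by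
    intro j
    have hEbound : ∀ N, M j ≤ N →
        P {ω | (2⁻¹ : ℝ) ^ j < ‖S N ω - S (M j) ω‖} ≤ (2⁻¹ : ℝ≥0∞) ^ (j + 2) := by
      intro N hN
      have hsub : {ω | (2⁻¹ : ℝ) ^ j < ‖S N ω - S (M j) ω‖}
          ⊆ {ω | (2⁻¹ : ℝ) ^ j / 2 < ‖Sinf ω - S N ω‖}
            ∪ {ω | (2⁻¹ : ℝ) ^ j / 2 < ‖Sinf ω - S (M j) ω‖} := by
        intro ω hω
        simp only [Set.mem_setOf_eq, Set.mem_union] at hω ⊢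
        by_contra hcon
        push_neg at hcon
        have hdecomp : S N ω - S (M j) ω = (Sinf ω - S (M j) ω) - (Sinf ω - S N ω) := by
          abel
        have hb := norm_sub_le (Sinf ω - S (M j) ω) (Sinf ω - S N ω)
        rw [← hdecomp] at hb
        linarith [hcon.1, hcon.2]
      calc P {ω | (2⁻¹ : ℝ) ^ j < ‖S N ω - S (M j) ω‖}
          ≤ P ({ω | (2⁻¹ : ℝ) ^ j / 2 < ‖Sinf ω - S N ω‖}
            ∪ {ω | (2⁻¹ : ℝ) ^ j / 2 < ‖Sinf ω - S (M j) ω‖}) := measure_mono hsub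
        _ ≤ P {ω | (2⁻¹ : ℝ) ^ j / 2 < ‖Sinf ω - S N ω‖}
            + P {ω | (2⁻¹ : ℝ) ^ j / 2 < ‖Sinf ω - S (M j) ω‖} := measure_union_le _ _
        _ ≤ (2⁻¹ : ℝ≥0∞) ^ (j + 3) + (2⁻¹ : ℝ≥0∞) ^ (j + 3) :=
            add_le_add (hM j N hN).le (hM j (M j) le_rfl).le
        _ = (2⁻¹ : ℝ≥0∞) ^ (j + 2) := by
            rw [pow_succ, ← mul_add, htwo, mul_one]
    set D : ℕ → Set Ω := fun N =>
      {ω | ∃ k, M j ≤ k ∧ k ≤ N ∧ (2⁻¹ : ℝ) ^ j < ‖S k ω - S (M j) ω‖} with hD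
    have hmon : Monotone D := by
      intro a b hab ω
      rintro ⟨k, h1, h2, h3⟩
      exact ⟨k, h1, h2.trans hab, h3⟩
    have hDb : ∀ N, P (D N) ≤ (2⁻¹ : ℝ≥0∞) ^ (j + 1) := by
      have hcase : ∀ N, M j ≤ N → P (D N) ≤ (2⁻¹ : ℝ≥0∞) ^ (j + 1) := by
        intro N hN
        calc P (D N)
            ≤ 2 * P {ω | (2⁻¹ : ℝ) ^ j < ‖S N ω - S (M j) ω‖} :=
              levy_ineq P γ hmeas hindep hsymm x (M j) N hN ((2⁻¹ : ℝ) ^ j)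
          _ ≤ 2 * (2⁻¹ : ℝ≥0∞) ^ (j + 2) := mul_le_mul_right (hEbound N hN) 2
          _ = (2⁻¹ : ℝ≥0∞) ^ (j + 1) := by
              have h2 : (2 : ℝ≥0∞) * 2⁻¹ = 1 :=
                ENNReal.mul_inv_cancel (by norm_num) (by norm_num)
              rw [pow_succ, mul_comm ((2⁻¹ : ℝ≥0∞) ^ (j + 1)) 2⁻¹, ← mul_assoc, h2, one_mul]
      intro N
      rcases le_or_gt (M j) N with h | h
      · exact hcase N h
      · exact (measure_mono (hmon h.le)).trans (hcase (M j) le_rfl)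
    have hGeq : G j = ⋃ N, D N := by
      ext ω
      simp only [hG, hD, Set.mem_setOf_eq, Set.mem_iUnion]
      constructor
      · rintro ⟨k, h1, h2⟩; exact ⟨k, k, h1, le_rfl, h2⟩
      · rintro ⟨N, k, h1, _, h3⟩; exact ⟨k, h1, h3⟩
    rw [hGeq, (hmon.directed_le).measure_iUnion]
    refine iSup_le fun N => (hDb N).trans ?_
    exact pow_le_pow_of_le_one zero_le (by simp) (Nat.le_succ j)
  have htsum : (∑' j, P (G j)) ≠ ∞ := by
    refine ne_top_of_le_ne_top ?_ (ENNReal.tsum_le_tsum hGbound)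
    rw [ENNReal.tsum_geometric]
    simp [ENNReal.one_sub_inv_two]
  have hae := MeasureTheory.ae_eventually_notMem htsum
  have hTIM : TendstoInMeasure P (fun N ω => S N ω) atTop Sinf := by
    rw [tendstoInMeasure_iff_dist]
    intro δ hδ
    have hhalf : (0 : ℝ) < δ / 2 := by linarith
    refine tendsto_of_tendsto_of_tendsto_of_le_of_le tendsto_const_nhds (hprob (δ / 2) hhalf)
      (fun N => zero_le) (fun N => measure_mono ?_)
    intro ω hω
    simp only [Set.mem_setOf_eq] at hω ⊢
    have hd : dist (S N ω) (Sinf ω) = ‖Sinf ω - S N ω‖ := by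
      rw [dist_eq_norm, norm_sub_rev]
    linarith [hω]
  obtain ⟨ns, hns, hnsae⟩ := hTIM.exists_seq_tendsto_ae
  filter_upwards [hae, hnsae] with ω h1 h2
  have hcauchy : CauchySeq (fun N => S N ω) := by
    rw [Metric.cauchySeq_iff']
    intro δ hδ
    obtain ⟨J, hJ⟩ := eventually_atTop.1 h1
    obtain ⟨j0, hj0⟩ := exists_pow_lt_of_lt_one hδ (by norm_num : (2⁻¹ : ℝ) < 1)
    refine ⟨M (max j0 J), fun n hn => ?_⟩
    have hnotmem := hJ (max j0 J) (le_max_right _ _)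
    simp only [hG, Set.mem_setOf_eq, not_exists, not_and, not_lt] at hnotmem
    have hle := hnotmem n hn
    have hmono : (2⁻¹ : ℝ) ^ (max j0 J) ≤ (2⁻¹ : ℝ) ^ j0 :=
      pow_le_pow_of_le_one (by norm_num) (by norm_num) (le_max_left _ _)
    rw [dist_eq_norm]
    calc ‖S n ω - S (M (max j0 J)) ω‖ ≤ (2⁻¹ : ℝ) ^ (max j0 J) := hle
      _ ≤ (2⁻¹ : ℝ) ^ j0 := hmono
      _ < δ := hj0
  obtain ⟨L, hL⟩ := cauchySeq_tendsto_of_complete hcauchy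
  have hsubL : Tendsto (fun i => S (ns i) ω) atTop (𝓝 L) := hL.comp hns.tendsto_atTop
  have hLe : Sinf ω = L := tendsto_nhds_unique h2 hsubL
  rw [hLe]
  exact hL
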